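/- If M is a closed subspace of E and N is a finite-dimensional subspace of E, then M + N is a closed subspace of E. In particular, every finite-dimensional subspace of E is closed. -/

import Mathlib

/-- A (nondegenerate) Hermitian space: a division ring `K` with an involution,
a left `K`-vector space `E`, and a Hermitian form on `E`. -/
structure HermitianSpace (K E : Type*) [DivisionRing K] [AddCommGroup E] [Module K E] where
  star : K → K
  star_add : ∀ a b : K, star (a + b) = star a + star b
  star_mul : ∀ a b : K, star (a * b) = star b * star a
  star_star : ∀ a : K, star (star a) = a
  form : E → E → K
  form_add_left : ∀ x y z : E, form (x + y) z = form x z + form y z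
  form_add_right : ∀ x y z : E, form x (y + z) = form x y + form x z
  form_smul_left : ∀ (ρ : K) (x y : E), form (ρ • x) y = ρ * form x y
  form_smul_right : ∀ (ρ : K) (x y : E), form x (ρ • y) = form x y * star ρ
  nondeg : ∀ a : E, (∀ x : E, form a x = 0) → a = 0
  hermitian : ∀ x y : E, star (form x y) = form y x

namespace HermitianSpace

variable {K E : Type*} [DivisionRing K] [AddCommGroup E] [Module K E]

/-- The orthogonal companion `M^⊥` of a subspace `M`. -/
def perp (h : HermitianSpace K E) (M : Submodule K E) : Submodule K E where
  carrier := {x : E | ∀ m ∈ M, h.form x m = 0}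
  add_mem' := fun {a b} ha hb => by
    intro m hm
    rw [h.form_add_left, ha m hm, hb m hm, add_zero]
  zero_mem' := by
    intro m hm
    have h0 : h.form ((0 : K) • (0 : E)) m = 0 * h.form 0 m := h.form_smul_left 0 0 m
    simpa using h0
  smul_mem' := fun c a ha => by
    intro m hm
    rw [h.form_smul_left, ha m hm, mul_zero]

/-- The form is orthomodular when `M + M^⊥ = E` for every closed subspace `M`. -/
def Orthomodular (h : HermitianSpace K E) : Prop :=
  ∀ M : Submodule K E, h.perp (h.perp M) = M → M ⊔ h.perp M = ⊤

/-- The form is anisotropic when `⟨x, x⟩ ≠ 0` for every nonzero `x`. -/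
def Anisotropic (h : HermitianSpace K E) : Prop :=
  ∀ x : E, x ≠ 0 → h.form x x ≠ 0

end HermitianSpace

section Aux

variable {K E : Type*} [DivisionRing K] [AddCommGroup E] [Module K E]
variable (h : HermitianSpace K E)

lemma HS.star_zero : h.star 0 = 0 := by
  have := h.star_add 0 0
  simpa using this.symm

lemma HS.form_zero_left (y : E) : h.form 0 y = 0 := by
  have := h.form_smul_left 0 0 y
  simpa using this

lemma HS.form_zero_right (x : E) : h.form x 0 = 0 := by
  have := h.form_smul_right 0 x 0
  simpa [HS.star_zero h] using this

lemma HS.form_sub_left (x y z : E) : h.form (x - y) z = h.form x z - h.form y z := by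
  have := h.form_add_left (x - y) y z
  rw [sub_add_cancel] at this
  rw [this, add_sub_cancel_right]

lemma HS.form_sub_right (x y z : E) : h.form x (y - z) = h.form x y - h.form x z := by
  have := h.form_add_right x (y - z) z
  rw [sub_add_cancel] at this
  rw [this, add_sub_cancel_right]

lemma HS.mem_perp {M : Submodule K E} {x : E} :
    x ∈ h.perp M ↔ ∀ m ∈ M, h.form x m = 0 := Iff.rfl

lemma HS.le_perp_perp (M : Submodule K E) : M ≤ h.perp (h.perp M) := by
  intro m hm z hz
  rw [← h.hermitian, hz m hm, HS.star_zero h]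

lemma HS.perp_antitone {M N : Submodule K E} (hMN : M ≤ N) : h.perp N ≤ h.perp M :=
  fun x hx m hm => hx m (hMN hm)

lemma HS.closed_bot : h.perp (h.perp (⊥ : Submodule K E)) = ⊥ := by
  apply le_antisymm _ bot_le
  intro x hx
  have hp : ∀ y : E, y ∈ h.perp (⊥ : Submodule K E) := by
    intro y m hm
    rw [Submodule.mem_bot] at hm
    rw [hm, HS.form_zero_right h]
  have : ∀ m : E, h.form x m = 0 := fun m => hx m (hp m)
  simpa using h.nondeg x this

end Aux

section Aux2

variable {K E : Type*} [DivisionRing K] [AddCommGroup E] [Module K E]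
variable (h : HermitianSpace K E)

lemma HS.step (M : Submodule K E) (hM : h.perp (h.perp M) = M) (x : E) :
    h.perp (h.perp (M ⊔ Submodule.span K {x})) = M ⊔ Submodule.span K {x} := by
  apply le_antisymm _ (HS.le_perp_perp h _)
  by_cases hc : ∀ z ∈ h.perp M, h.form z x = 0
  · have hx : x ∈ M := by
      rw [← hM]
      intro z hz
      rw [← h.hermitian, hc z hz, HS.star_zero h]
    have hsp : M ⊔ Submodule.span K {x} = M := by
      rw [sup_eq_left]
      exact Submodule.span_le.2 (by simpa using hx)
    rw [hsp, hM]
  · push_neg at hc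
    obtain ⟨z, hz, hzx⟩ := hc
    have hα : h.form x z ≠ 0 := by
      intro h0
      exact hzx (by rw [← h.hermitian, h0, HS.star_zero h])
    intro y hy
    set ρ := h.form y z * (h.form x z)⁻¹ with hρ
    have hxmem : x ∈ h.perp (h.perp (M ⊔ Submodule.span K {x})) :=
      HS.le_perp_perp h _
        (Submodule.mem_sup_right (Submodule.mem_span_singleton_self x))
    have hy' : y - ρ • x ∈ h.perp (h.perp (M ⊔ Submodule.span K {x})) :=
      Submodule.sub_mem _ hy (Submodule.smul_mem _ _ hxmem)
    have hkey : y - ρ • x ∈ M := by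
      rw [← hM]
      intro w hw
      set σ := h.form w x * (h.form z x)⁻¹ with hσ
      have hσz : σ * h.form z x = h.form w x := by
        rw [hσ, mul_assoc, inv_mul_cancel₀ hzx, mul_one]
      have hw' : w - σ • z ∈ h.perp (M ⊔ Submodule.span K {x}) := by
        intro m hm
        rcases Submodule.mem_sup.1 hm with ⟨a, ha, b, hb, rfl⟩
        rcases Submodule.mem_span_singleton.1 hb with ⟨c, rfl⟩
        rw [h.form_add_right, HS.form_sub_left h, HS.form_sub_left h,
          h.form_smul_left, h.form_smul_left, hw a ha, hz a ha,
          h.form_smul_right, h.form_smul_right, ← mul_assoc, hσz]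
        simp
      have h1 : h.form (y - ρ • x) (w - σ • z) = 0 := hy' _ hw'
      have h2 : h.form (y - ρ • x) z = 0 := by
        rw [HS.form_sub_left h, h.form_smul_left, hρ, mul_assoc,
          inv_mul_cancel₀ hα, mul_one, sub_self]
      have h3 := HS.form_sub_right h (y - ρ • x) w (σ • z)
      rw [h1, h.form_smul_right, h2, zero_mul, sub_zero] at h3
      exact h3.symm
    have hyeq : y = (y - ρ • x) + ρ • x := by abel
    rw [hyeq]
    exact Submodule.add_mem _ (Submodule.mem_sup_left hkey)
      (Submodule.mem_sup_right
        (Submodule.smul_mem _ _ (Submodule.mem_span_singleton_self x)))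

lemma HS.sup_span_finset (s : Finset E) :
    ∀ M : Submodule K E, h.perp (h.perp M) = M →
      h.perp (h.perp (M ⊔ Submodule.span K (s : Set E))) =
        M ⊔ Submodule.span K (s : Set E) := by
  classical
  induction s using Finset.induction_on with
  | empty => intro M hM; simpa using hM
  | insert a s hne ih =>
    intro M hM
    rw [Finset.coe_insert, Submodule.span_insert, ← sup_assoc, sup_comm M,
      sup_assoc, sup_comm (Submodule.span K {a})]
    exact HS.step h _ (ih M hM) a

end Aux2

/-- If `M` is closed and `N` is finite-dimensional then `M + N` is closed;
in particular every finite-dimensional subspace is closed. -/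
theorem closed_sup_finiteDimensional {K E : Type*} [DivisionRing K] [AddCommGroup E] [Module K E]
    (h : HermitianSpace K E) (M N : Submodule K E)
    (hM : h.perp (h.perp M) = M) (hN : FiniteDimensional K N) :
    h.perp (h.perp (M ⊔ N)) = M ⊔ N ∧
      ∀ P : Submodule K E, FiniteDimensional K P → h.perp (h.perp P) = P := by
  have key : ∀ P : Submodule K E, FiniteDimensional K P →
      ∀ Q : Submodule K E, h.perp (h.perp Q) = Q →
        h.perp (h.perp (Q ⊔ P)) = Q ⊔ P := by
    intro P hP Q hQ
    obtain ⟨s, hs⟩ : P.FG := Module.Finite.iff_fg.1 hP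
    rw [← hs]
    exact HS.sup_span_finset h s Q hQ
  refine ⟨key N hN M hM, fun P hP => ?_⟩
  have := key P hP ⊥ (HS.closed_bot h)
  simpa using this
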